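/- For the surface pencil X(s,t) = γ(s) + A(t)V₂(s) + B(t)V₄(s) with normal frame N₁ = ((A')²+(B')²)^{-1/2}(-B'V₂+A'V₄), N₂ = (a²+b²)^{-1/2}(-bV₁+aV₃), the second fundamental form coefficients are: ⟨X_ss,N₁⟩ = (A'bκ₃ - B'(κ₁a - κ₂b))/√((A')²+(B')²), ⟨X_st,N₁⟩ = 0, ⟨X_tt,N₁⟩ = (A'B'' - B'A'')/√((A')²+(B')²), ⟨X_ss,N₂⟩ = (ab_s - ba_s)/√(a²+b²), ⟨X_st,N₂⟩ = (ab_t - ba_t)/√(a²+b²), ⟨X_tt,N₂⟩ = 0. -/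

import Mathlib

/-- Second fundamental form coefficients of the surface pencil, computed
as inner products of the Frenet expansions of `X_ss`, `X_st`, `X_tt` with the normal
frame `N₁, N₂`. -/
theorem surface_pencil_second_fundamental_form
    (V₁ V₂ V₃ V₄ : EuclideanSpace ℝ (Fin 4))
    (horth : ∀ i j : Fin 4,
      (inner ℝ (![V₁, V₂, V₃, V₄] i) (![V₁, V₂, V₃, V₄] j) : ℝ) = if i = j then 1 else 0)
    (a b A' B' A'' B'' κ₁ κ₂ κ₃ a_s b_s a_t b_t : ℝ)
    (hG : A' ^ 2 + B' ^ 2 > 0) (hE : a ^ 2 + b ^ 2 > 0)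
    (N₁ N₂ Xss Xst Xtt : EuclideanSpace ℝ (Fin 4))
    (hN₁ : N₁ = (Real.sqrt (A' ^ 2 + B' ^ 2))⁻¹ • ((-B') • V₂ + A' • V₄))
    (hN₂ : N₂ = (Real.sqrt (a ^ 2 + b ^ 2))⁻¹ • ((-b) • V₁ + a • V₃))
    (hXss : Xss = a_s • V₁ + (κ₁ * a - κ₂ * b) • V₂ + b_s • V₃ + (κ₃ * b) • V₄)
    (hXst : Xst = a_t • V₁ + b_t • V₃)
    (hXtt : Xtt = A'' • V₂ + B'' • V₄) :
    (inner ℝ Xss N₁ : ℝ) = (A' * b * κ₃ - B' * (κ₁ * a - κ₂ * b)) / Real.sqrt (A' ^ 2 + B' ^ 2) ∧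
    (inner ℝ Xst N₁ : ℝ) = 0 ∧
    (inner ℝ Xtt N₁ : ℝ) = (A' * B'' - B' * A'') / Real.sqrt (A' ^ 2 + B' ^ 2) ∧
    (inner ℝ Xss N₂ : ℝ) = (a * b_s - b * a_s) / Real.sqrt (a ^ 2 + b ^ 2) ∧
    (inner ℝ Xst N₂ : ℝ) = (a * b_t - b * a_t) / Real.sqrt (a ^ 2 + b ^ 2) ∧
    (inner ℝ Xtt N₂ : ℝ) = 0 := by
  have e (i j : Fin 4) := horth i j
  have e11 : (inner ℝ V₁ V₁ : ℝ) = 1 := by simpa using e 0 0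
  have e22 : (inner ℝ V₂ V₂ : ℝ) = 1 := by simpa using e 1 1
  have e33 : (inner ℝ V₃ V₃ : ℝ) = 1 := by simpa using e 2 2
  have e44 : (inner ℝ V₄ V₄ : ℝ) = 1 := by simpa using e 3 3
  have e12 : (inner ℝ V₁ V₂ : ℝ) = 0 := by simpa using e 0 1
  have e13 : (inner ℝ V₁ V₃ : ℝ) = 0 := by simpa using e 0 2
  have e14 : (inner ℝ V₁ V₄ : ℝ) = 0 := by simpa using e 0 3
  have e21 : (inner ℝ V₂ V₁ : ℝ) = 0 := by simpa using e 1 0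
  have e23 : (inner ℝ V₂ V₃ : ℝ) = 0 := by simpa using e 1 2
  have e24 : (inner ℝ V₂ V₄ : ℝ) = 0 := by simpa using e 1 3
  have e31 : (inner ℝ V₃ V₁ : ℝ) = 0 := by simpa using e 2 0
  have e32 : (inner ℝ V₃ V₂ : ℝ) = 0 := by simpa using e 2 1
  have e34 : (inner ℝ V₃ V₄ : ℝ) = 0 := by simpa using e 2 3
  have e41 : (inner ℝ V₄ V₁ : ℝ) = 0 := by simpa using e 3 0
  have e42 : (inner ℝ V₄ V₂ : ℝ) = 0 := by simpa using e 3 1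
  have e43 : (inner ℝ V₄ V₃ : ℝ) = 0 := by simpa using e 3 2
  subst hN₁ hN₂ hXss hXst hXtt
  simp only [inner_add_left, inner_add_right, real_inner_smul_left, real_inner_smul_right,
    e11, e22, e33, e44, e12, e13, e14, e21, e23, e24, e31, e32, e34, e41, e42, e43]
  have hs : Real.sqrt (A' ^ 2 + B' ^ 2) * Real.sqrt (A' ^ 2 + B' ^ 2) = A' ^ 2 + B' ^ 2 :=
    Real.mul_self_sqrt hG.le
  have ht : Real.sqrt (a ^ 2 + b ^ 2) * Real.sqrt (a ^ 2 + b ^ 2) = a ^ 2 + b ^ 2 :=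
    Real.mul_self_sqrt hE.le
  refine ⟨?_, ?_, ?_, ?_, ?_, ?_⟩
  · field_simp
    ring
  · ring
  · field_simp
    ring
  · field_simp
    ring
  · field_simp
    ring
  · ring
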